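/- Let p : ℂ^(m×n) → ℂ be a nonzero polynomial satisfying the system of partial differential equations E p = C · p for some constant matrix C ∈ ℂ^(n×n), where E = Uᵀ ∂/∂U. Then C = α · I for some α ∈ ℕ₀. -/

import Mathlib

open scoped BigOperators
open MvPolynomial

lemma pderiv_comm' {σ : Type*} [DecidableEq σ] (i j : σ) (q : MvPolynomial σ ℂ) :
    pderiv i (pderiv j q) = pderiv j (pderiv i q) := by
  induction q using MvPolynomial.induction_on' with
  | add p q hp hq => simp [hp, hq]
  | monomial s a =>
    by_cases h : i = j
    · subst h; rfl
    · simp only [pderiv_monomial]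
      rw [tsub_right_comm]
      congr 1
      rw [Finsupp.tsub_apply, Finsupp.tsub_apply, Finsupp.single_apply, Finsupp.single_apply]
      simp only [h, Ne.symm h, if_false, Nat.sub_zero]
      ring

lemma coeff_X_mul_pderiv {m n : ℕ} (k : Fin m × Fin n)
    (q : MvPolynomial (Fin m × Fin n) ℂ) (σ : (Fin m × Fin n) →₀ ℕ) :
    coeff σ (X k * pderiv k q) = (σ k : ℂ) * coeff σ q := by
  have key : ∀ (s : (Fin m × Fin n) →₀ ℕ) (a : ℂ),
      X k * pderiv k (monomial s a) = monomial s (a * s k) := by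
    intro s a
    by_cases h : s k = 0
    · simp [pderiv_monomial, h]
    · have hs : Finsupp.single k 1 + (s - Finsupp.single k 1) = s := by
        ext x
        rw [Finsupp.add_apply, Finsupp.tsub_apply, Finsupp.single_apply]
        by_cases hx : k = x
        · subst hx; simp; omega
        · simp [hx]
      rw [pderiv_monomial, X, monomial_mul, hs, one_mul]
  have expand : X k * pderiv k q = ∑ s ∈ q.support, monomial s (coeff s q * s k) := by
    conv_lhs => rw [q.as_sum]
    rw [map_sum, Finset.mul_sum]
    exact Finset.sum_congr rfl fun s _ => key s _
  rw [expand, coeff_sum]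
  simp_rw [coeff_monomial]
  rw [Finset.sum_ite_eq' q.support σ]
  by_cases hσ : σ ∈ q.support
  · simp [hσ, mul_comm]
  · simp [hσ, MvPolynomial.notMem_support_iff.mp hσ]

lemma Eexpand {m n : ℕ} (a b c d : Fin n) (q : MvPolynomial (Fin m × Fin n) ℂ) :
    (∑ e, X (e, a) * pderiv (e, b) (∑ f, X ((f : Fin m), c) * pderiv (f, d) q))
    = (if b = c then ∑ e, X ((e : Fin m), a) * pderiv (e, d) q else 0)
      + ∑ e, ∑ f, X ((e : Fin m), a) * (X ((f : Fin m), c) * pderiv (e, b) (pderiv (f, d) q)) := by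
  have step : ∀ e : Fin m,
      pderiv (e, b) (∑ f, X ((f : Fin m), c) * pderiv (f, d) q)
      = (if b = c then pderiv (e, d) q else 0)
        + ∑ f, X ((f : Fin m), c) * pderiv (e, b) (pderiv (f, d) q) := by
    intro e
    rw [map_sum]
    have : ∀ f : Fin m,
        pderiv (e, b) (X (f, c) * pderiv (f, d) q)
        = (if (f, c) = (e, b) then pderiv (f, d) q else 0)
          + X (f, c) * pderiv (e, b) (pderiv (f, d) q) := by
      intro f
      rw [pderiv_mul]
      congr 1
      by_cases h : (f, c) = (e, b)
      · simp [h, pderiv_X_self]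
      · simp [pderiv_X_of_ne h, h]
    simp_rw [this, Finset.sum_add_distrib]
    congr 1
    by_cases hbc : b = c
    · subst hbc
      rw [Finset.sum_eq_single e]
      · simp
      · intro f _ hf; simp [Prod.ext_iff, hf]
      · simp
    · rw [Finset.sum_eq_zero, if_neg hbc]
      intro f _
      rw [if_neg]
      simp [Prod.ext_iff, Ne.symm hbc]
  simp_rw [step, mul_add, Finset.sum_add_distrib, Finset.mul_sum]
  congr 1
  by_cases hbc : b = c <;> simp [hbc, Finset.mul_sum]

lemma Ecomm {m n : ℕ} (a b c d : Fin n) (q : MvPolynomial (Fin m × Fin n) ℂ) :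
    (∑ e, X (e, a) * pderiv (e, b) (∑ f, X ((f : Fin m), c) * pderiv (f, d) q))
    - (∑ e, X (e, c) * pderiv (e, d) (∑ f, X ((f : Fin m), a) * pderiv (f, b) q))
    = (if b = c then ∑ e, X ((e : Fin m), a) * pderiv (e, d) q else 0)
      - (if d = a then ∑ e, X ((e : Fin m), c) * pderiv (e, b) q else 0) := by
  rw [Eexpand, Eexpand]
  have hsym :
      (∑ e, ∑ f, X ((e : Fin m), a) * (X ((f : Fin m), c) * pderiv (e, b) (pderiv (f, d) q)))
      = ∑ e, ∑ f, X ((e : Fin m), c) * (X ((f : Fin m), a) * pderiv (e, d) (pderiv (f, b) q)) := by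
    rw [Finset.sum_comm]
    refine Finset.sum_congr rfl fun e _ => Finset.sum_congr rfl fun f _ => ?_
    rw [pderiv_comm']
    ring
  rw [hsym]
  ring

lemma EopC {m n : ℕ} (a b : Fin n) (c : ℂ) (q : MvPolynomial (Fin m × Fin n) ℂ) :
    (∑ e, X ((e : Fin m), a) * pderiv (e, b) (MvPolynomial.C c * q))
    = MvPolynomial.C c * ∑ e, X ((e : Fin m), a) * pderiv (e, b) q := by
  simp_rw [pderiv_C_mul, Finset.mul_sum, mul_left_comm]

/-- If a nonzero polynomial `p` on `ℂ^(m×n)` satisfies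
`E p = C · p` for a constant matrix `C ∈ ℂ^(n×n)`, where `E = Uᵀ ∂/∂U` is the
generalized Euler operator, then `C = α · I` for some `α ∈ ℕ`. -/
theorem stmt3 {m n : ℕ} (p : MvPolynomial (Fin m × Fin n) ℂ) (hp : p ≠ 0)
    (M : Matrix (Fin n) (Fin n) ℂ)
    (hE : ∀ i j : Fin n,
      (∑ d, X (d, i) * pderiv (d, j) p) = MvPolynomial.C (M i j) * p) :
    ∃ α : ℕ, M = (α : ℂ) • (1 : Matrix (Fin n) (Fin n) ℂ) := by
  obtain ⟨σ0, hσ0⟩ := MvPolynomial.support_nonempty.mpr hp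
  have hc0 : coeff σ0 p ≠ 0 := MvPolynomial.mem_support_iff.mp hσ0
  -- diagonal entries are natural numbers
  have hdiag : ∀ i : Fin n, M i i = ((∑ d, σ0 (d, i) : ℕ) : ℂ) := by
    intro i
    have h := congrArg (coeff σ0) (hE i i)
    rw [coeff_sum, coeff_C_mul] at h
    simp_rw [coeff_X_mul_pderiv] at h
    rw [← Finset.sum_mul] at h
    have := mul_right_cancel₀ hc0 h.symm
    rw [this]
    push_cast
    rfl
  -- off-diagonal entries vanish
  have hoff : ∀ i j : Fin n, i ≠ j → M i j = 0 := by
    intro i j hij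
    have h1 := Ecomm (m := m) i i i j p
    rw [hE i j, hE i i, EopC, EopC, hE i i, hE i j,
      if_pos rfl, if_neg (Ne.symm hij), sub_zero] at h1
    have h0 : MvPolynomial.C (M i j) * p = 0 := by linear_combination -h1
    rcases mul_eq_zero.mp h0 with h | h
    · exact MvPolynomial.C_eq_zero.mp h
    · exact absurd h hp
  -- diagonal entries are all equal
  have hdeq : ∀ i j : Fin n, M i i = M j j := by
    intro i j
    have h2 := Ecomm (m := m) i j j i p
    rw [hE j i, hE i j, EopC, EopC, hE i j, hE j i,
      if_pos rfl, if_pos rfl, hE i i, hE j j] at h2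
    have h0 : (MvPolynomial.C (M i i - M j j)) * p = 0 := by
      rw [map_sub]; linear_combination -h2
    rcases mul_eq_zero.mp h0 with h | h
    · exact sub_eq_zero.mp (MvPolynomial.C_eq_zero.mp h)
    · exact absurd h hp
  rcases Nat.eq_zero_or_pos n with hn | hn
  · subst hn
    exact ⟨0, by ext i j; exact i.elim0⟩
  · set i0 : Fin n := ⟨0, hn⟩
    refine ⟨∑ d, σ0 (d, i0), ?_⟩
    ext i j
    by_cases hij : i = j
    · subst hij
      rw [Matrix.smul_apply, Matrix.one_apply_eq, smul_eq_mul, mul_one]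
      rw [hdeq i i0, hdiag i0]
    · rw [Matrix.smul_apply, Matrix.one_apply_ne hij, smul_zero]
      exact hoff i j hij
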